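/- For all vectors r, s ∈ ℝ³, |r ∧ s|² ≤ |r|·|r−s|²·|s|, where ∧ denotes the cross product. -/
import Mathlib


/-- The cross product on `EuclideanSpace ℝ (Fin 3)`. -/
noncomputable def cross3 (r s : EuclideanSpace ℝ (Fin 3)) : EuclideanSpace ℝ (Fin 3) :=
  (WithLp.equiv 2 (Fin 3 → ℝ)).symm
    ![r 1 * s 2 - r 2 * s 1, r 2 * s 0 - r 0 * s 2, r 0 * s 1 - r 1 * s 0]

lemma norm_sq_eq3 (a : EuclideanSpace ℝ (Fin 3)) :
    ‖a‖ ^ 2 = a 0 ^ 2 + a 1 ^ 2 + a 2 ^ 2 := by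
  rw [EuclideanSpace.norm_eq, Real.sq_sqrt (by positivity)]
  simp [Fin.sum_univ_three, sq_abs]

lemma cross3_norm_sq (a b : EuclideanSpace ℝ (Fin 3)) :
    ‖cross3 a b‖ ^ 2 = (a 1 * b 2 - a 2 * b 1) ^ 2 + (a 2 * b 0 - a 0 * b 2) ^ 2
      + (a 0 * b 1 - a 1 * b 0) ^ 2 := by
  rw [norm_sq_eq3]
  simp [cross3]

lemma cross3_norm_le (a b : EuclideanSpace ℝ (Fin 3)) :
    ‖cross3 a b‖ ≤ ‖a‖ * ‖b‖ := by
  have h2 : ‖cross3 a b‖ ^ 2 ≤ (‖a‖ * ‖b‖) ^ 2 := by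
    rw [cross3_norm_sq, mul_pow, norm_sq_eq3, norm_sq_eq3]
    nlinarith [sq_nonneg (a 0 * b 0 + a 1 * b 1 + a 2 * b 2)]
  calc ‖cross3 a b‖ = Real.sqrt (‖cross3 a b‖ ^ 2) := (Real.sqrt_sq (norm_nonneg _)).symm
    _ ≤ Real.sqrt ((‖a‖ * ‖b‖) ^ 2) := Real.sqrt_le_sqrt h2
    _ = ‖a‖ * ‖b‖ := Real.sqrt_sq (by positivity)

theorem cross_sq_le (r s : EuclideanSpace ℝ (Fin 3)) :
    ‖cross3 r s‖ ^ 2 ≤ ‖r‖ * ‖r - s‖ ^ 2 * ‖s‖ := by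
  have hsub : ∀ i, (r - s) i = r i - s i := fun i => rfl
  have h1 : ‖cross3 r (r - s)‖ = ‖cross3 r s‖ := by
    have : ‖cross3 r (r - s)‖ ^ 2 = ‖cross3 r s‖ ^ 2 := by
      rw [cross3_norm_sq, cross3_norm_sq, hsub, hsub, hsub]; ring
    calc ‖cross3 r (r - s)‖ = Real.sqrt (‖cross3 r (r - s)‖ ^ 2) := (Real.sqrt_sq (norm_nonneg _)).symm
      _ = Real.sqrt (‖cross3 r s‖ ^ 2) := by rw [this]
      _ = ‖cross3 r s‖ := Real.sqrt_sq (norm_nonneg _)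
  have h2 : ‖cross3 (r - s) s‖ = ‖cross3 r s‖ := by
    have : ‖cross3 (r - s) s‖ ^ 2 = ‖cross3 r s‖ ^ 2 := by
      rw [cross3_norm_sq, cross3_norm_sq, hsub, hsub, hsub]; ring
    calc ‖cross3 (r - s) s‖ = Real.sqrt (‖cross3 (r - s) s‖ ^ 2) := (Real.sqrt_sq (norm_nonneg _)).symm
      _ = Real.sqrt (‖cross3 r s‖ ^ 2) := by rw [this]
      _ = ‖cross3 r s‖ := Real.sqrt_sq (norm_nonneg _)
  calc ‖cross3 r s‖ ^ 2 = ‖cross3 r (r - s)‖ * ‖cross3 (r - s) s‖ := by rw [h1, h2, sq]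
    _ ≤ (‖r‖ * ‖r - s‖) * (‖r - s‖ * ‖s‖) :=
      mul_le_mul (cross3_norm_le _ _) (cross3_norm_le _ _) (norm_nonneg _) (by positivity)
    _ = ‖r‖ * ‖r - s‖ ^ 2 * ‖s‖ := by ring
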